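/- Let G be a GP5-graph constructed from a connected graph H with n vertices. If G has a semipaired dominating set of cardinality at most 2n + k (k ≤ n), then H has a semipaired dominating set of cardinality at most k. -/

import Mathlib

open SimpleGraph Finset

/-- `D` is a dominating set of `G`. -/
def Dominating {V : Type*} (G : SimpleGraph V) (D : Finset V) : Prop :=
  ∀ v : V, ∃ u ∈ D, u = v ∨ G.Adj u v

/-- `D` is a semipaired dominating set of `G`: a dominating set whose vertices can be
partitioned into pairs (via a fixed-point-free involution) at distance at most 2. -/
def SemiPairedDom {V : Type*} (G : SimpleGraph V) (D : Finset V) : Prop :=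
  Dominating G D ∧ ∃ f : V → V,
    (∀ u ∈ D, f u ∈ D) ∧ (∀ u ∈ D, f (f u) = u) ∧ (∀ u ∈ D, f u ≠ u) ∧
    (∀ u ∈ D, G.Adj u (f u) ∨ ∃ w, G.Adj u w ∧ G.Adj w (f u))

/-- `D` is a paired dominating set of `G`: a dominating set whose induced subgraph has a
perfect matching (encoded by a fixed-point-free involution pairing adjacent vertices). -/
def PairedDom {V : Type*} (G : SimpleGraph V) (D : Finset V) : Prop :=
  Dominating G D ∧ ∃ f : V → V,
    (∀ u ∈ D, f u ∈ D) ∧ (∀ u ∈ D, f (f u) = u) ∧ (∀ u ∈ D, f u ≠ u) ∧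
    (∀ u ∈ D, G.Adj u (f u))

/-- The domination number. -/
noncomputable def domNum (V : Type*) [Fintype V] (G : SimpleGraph V) : ℕ :=
  sInf {k : ℕ | ∃ D : Finset V, Dominating G D ∧ D.card = k}

/-- The semipaired domination number. -/
noncomputable def semiPairedDomNum (V : Type*) [Fintype V] (G : SimpleGraph V) : ℕ :=
  sInf {k : ℕ | ∃ D : Finset V, SemiPairedDom G D ∧ D.card = k}

/-- The paired domination number. -/
noncomputable def pairedDomNum (V : Type*) [Fintype V] (G : SimpleGraph V) : ℕ :=
  sInf {k : ℕ | ∃ D : Finset V, PairedDom G D ∧ D.card = k}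

/-- The GP5-graph obtained from `H` by attaching, for each vertex `a`, a disjoint path
`a_a – b_a – c_a – d_a – e_a` (the vertices `Sum.inr (a, 0), …, Sum.inr (a, 4)`) and
joining `a` to the central vertex `c_a = Sum.inr (a, 2)`. -/
def GP5 {α : Type*} (H : SimpleGraph α) : SimpleGraph (α ⊕ α × Fin 5) :=
  SimpleGraph.fromRel (fun u v =>
    (∃ a b, u = Sum.inl a ∧ v = Sum.inl b ∧ H.Adj a b) ∨
    (∃ a, u = Sum.inl a ∧ v = Sum.inr (a, 2)) ∨
    (∃ (a : α) (j k : Fin 5), u = Sum.inr (a, j) ∧ v = Sum.inr (a, k) ∧ (k : ℕ) = (j : ℕ) + 1))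

section Aux
variable {α : Type*} {H : SimpleGraph α}


lemma gp5_adj_inl_inl {a b : α} : (GP5 H).Adj (Sum.inl a) (Sum.inl b) ↔ H.Adj a b := by
  constructor
  · rintro ⟨hne, h | h⟩ <;>
      rcases h with ⟨x, y, hx, hy, hadj⟩ | ⟨x, hx, hy⟩ | ⟨x, jj, kk, hx, hy, _⟩ <;>
      first
        | exact (Sum.inl_ne_inr hx).elim
        | exact (Sum.inl_ne_inr hy).elim
        | (rw [Sum.inl.injEq] at hx hy; subst hx; subst hy; first | exact hadj | exact hadj.symm)
  · intro h
    exact ⟨by simpa using h.ne, Or.inl (Or.inl ⟨a, b, rfl, rfl, h⟩)⟩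

lemma gp5_adj_inl_inr {a b : α} {j : Fin 5} :
    (GP5 H).Adj (Sum.inl a) (Sum.inr (b, j)) ↔ b = a ∧ j = 2 := by
  constructor
  · rintro ⟨hne, h | h⟩ <;>
      rcases h with ⟨x, y, hx, hy, hadj⟩ | ⟨x, hx, hy⟩ | ⟨x, jj, kk, hx, hy, _⟩ <;>
      first
        | exact (Sum.inl_ne_inr hx).elim
        | exact (Sum.inl_ne_inr hy).elim
        | exact (Sum.inr_ne_inl hx).elim
        | exact (Sum.inr_ne_inl hy).elim
        | (rw [Sum.inl.injEq] at hx
           rw [Sum.inr.injEq, Prod.mk.injEq] at hy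
           exact ⟨hy.1.trans hx.symm, hy.2⟩)
  · rintro ⟨rfl, rfl⟩
    exact ⟨Sum.inl_ne_inr, Or.inl (Or.inr (Or.inl ⟨b, rfl, rfl⟩))⟩

lemma gp5_adj_inr_inr {a b : α} {j k : Fin 5} :
    (GP5 H).Adj (Sum.inr (a, j)) (Sum.inr (b, k)) ↔
      a = b ∧ ((j : ℕ) + 1 = k ∨ (k : ℕ) + 1 = j) := by
  constructor
  · rintro ⟨hne, h | h⟩ <;>
      rcases h with ⟨x, y, hx, hy, hadj⟩ | ⟨x, hx, hy⟩ | ⟨x, jj, kk, hx, hy, hk⟩ <;>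
      first
        | exact (Sum.inr_ne_inl hx).elim
        | exact (Sum.inr_ne_inl hy).elim
        | (rw [Sum.inr.injEq, Prod.mk.injEq] at hx hy
           obtain ⟨hx1, hx2⟩ := hx
           obtain ⟨hy1, hy2⟩ := hy
           subst hx1; subst hy1; subst hx2; subst hy2
           exact ⟨rfl, by omega⟩)
  · rintro ⟨rfl, h | h⟩
    · exact ⟨by simp [Prod.ext_iff, Fin.ext_iff]; omega,
        Or.inl (Or.inr (Or.inr ⟨a, j, k, rfl, rfl, h.symm⟩))⟩
    · exact ⟨by simp [Prod.ext_iff, Fin.ext_iff]; omega,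
        Or.inr (Or.inr (Or.inr ⟨a, k, j, rfl, rfl, h.symm⟩))⟩

lemma gp5_adj_inr_inl {a b : α} {j : Fin 5} :
    (GP5 H).Adj (Sum.inr (a, j)) (Sum.inl b) ↔ a = b ∧ j = 2 := by
  rw [SimpleGraph.adj_comm, gp5_adj_inl_inr]

/-- being at distance at most 2 -/
def Near {β : Type*} (G : SimpleGraph β) (u v : β) : Prop :=
  G.Adj u v ∨ ∃ w, G.Adj u w ∧ G.Adj w v

lemma Near.symm {β : Type*} {G : SimpleGraph β} {u v : β} (h : Near G u v) : Near G v u := by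
  rcases h with h | ⟨w, h1, h2⟩
  · exact Or.inl h.symm
  · exact Or.inr ⟨w, h2.symm, h1.symm⟩


lemma nearB1 {a b : α} (hab : a ≠ b) (h : Near (GP5 H) (Sum.inl a) (Sum.inl b)) :
    H.Adj a b ∨ ∃ c, H.Adj a c ∧ H.Adj c b := by
  rcases h with h | ⟨w, h1, h2⟩
  · exact Or.inl (gp5_adj_inl_inl.1 h)
  · rcases w with c | ⟨c, m⟩
    · exact Or.inr ⟨c, gp5_adj_inl_inl.1 h1, gp5_adj_inl_inl.1 h2⟩
    · obtain ⟨rfl, rfl⟩ := gp5_adj_inl_inr.1 h1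
      exact absurd (gp5_adj_inr_inl.1 h2).1 hab

lemma nearB2 {a b : α} {j : Fin 5} (h : Near (GP5 H) (Sum.inl a) (Sum.inr (b, j))) :
    (j = 2 ∧ (b = a ∨ H.Adj a b)) ∨ (b = a ∧ ((j : ℕ) = 1 ∨ (j : ℕ) = 3)) := by
  rcases h with h | ⟨w, h1, h2⟩
  · obtain ⟨rfl, rfl⟩ := gp5_adj_inl_inr.1 h
    exact Or.inl ⟨rfl, Or.inl rfl⟩
  · rcases w with c | ⟨c, m⟩
    · obtain ⟨rfl, rfl⟩ := gp5_adj_inl_inr.1 h2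
      exact Or.inl ⟨rfl, Or.inr (gp5_adj_inl_inl.1 h1)⟩
    · obtain ⟨rfl, rfl⟩ := gp5_adj_inl_inr.1 h1
      obtain ⟨rfl, hm⟩ := gp5_adj_inr_inr.1 h2
      have : (2 : Fin 5).val = 2 := rfl
      exact Or.inr ⟨rfl, by omega⟩

lemma nearB4 {a b : α} {k : Fin 5} (h : Near (GP5 H) (Sum.inr (a, 2)) (Sum.inr (b, k))) :
    a = b := by
  rcases h with h | ⟨w, h1, h2⟩
  · exact (gp5_adj_inr_inr.1 h).1
  · rcases w with c | ⟨c, m⟩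
    · obtain ⟨rfl, -⟩ := gp5_adj_inr_inl.1 h1
      exact ((gp5_adj_inl_inr.1 h2).1).symm
    · exact (gp5_adj_inr_inr.1 h1).1.trans (gp5_adj_inr_inr.1 h2).1

lemma nearB5 {a : α} {j : Fin 5} {u : α ⊕ α × Fin 5} (hj : (j : ℕ) ≠ 2)
    (h : Near (GP5 H) (Sum.inr (a, j)) u) :
    u = Sum.inl a ∨ ∃ k : Fin 5, u = Sum.inr (a, k) := by
  rcases h with h | ⟨w, h1, h2⟩
  · rcases u with b | ⟨b, k⟩
    · obtain ⟨rfl, h2⟩ := gp5_adj_inr_inl.1 h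
      exact absurd (congrArg Fin.val h2) hj
    · exact Or.inr ⟨k, by rw [(gp5_adj_inr_inr.1 h).1]⟩
  · rcases w with c | ⟨c, m⟩
    · obtain ⟨rfl, h2'⟩ := gp5_adj_inr_inl.1 h1
      exact absurd (congrArg Fin.val h2') hj
    · obtain ⟨rfl, -⟩ := gp5_adj_inr_inr.1 h1
      rcases u with b | ⟨b, k⟩
      · obtain ⟨rfl, -⟩ := gp5_adj_inr_inl.1 h2
        exact Or.inl rfl
      · exact Or.inr ⟨k, by rw [(gp5_adj_inr_inr.1 h2).1]⟩

lemma adjB6 {a : α} {u : α ⊕ α × Fin 5} (h : (GP5 H).Adj u (Sum.inr (a, 0))) :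
    u = Sum.inr (a, 1) := by
  rcases u with b | ⟨b, k⟩
  · exact absurd (gp5_adj_inl_inr.1 h).2 (by decide)
  · obtain ⟨rfl, hk⟩ := gp5_adj_inr_inr.1 h
    have : (0 : Fin 5).val = 0 := rfl
    have hk1 : (k : ℕ) = 1 := by omega
    congr 1
    exact Prod.ext rfl (Fin.ext (by simpa using hk1))

lemma adjB7 {a : α} {u : α ⊕ α × Fin 5} (h : (GP5 H).Adj u (Sum.inr (a, 4))) :
    u = Sum.inr (a, 3) := by
  rcases u with b | ⟨b, k⟩
  · exact absurd (gp5_adj_inl_inr.1 h).2 (by decide)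
  · obtain ⟨rfl, hk⟩ := gp5_adj_inr_inr.1 h
    have : (4 : Fin 5).val = 4 := rfl
    have h5 : (k : ℕ) < 5 := k.isLt
    have hk1 : (k : ℕ) = 3 := by omega
    congr 1
    exact Prod.ext rfl (Fin.ext (by simpa using hk1))

end Aux

lemma pairup {α : Type*} [DecidableEq α] (H : SimpleGraph α)
    (hiso : ∀ v : α, ∃ u : α, H.Adj u v) :
    ∀ (N : ℕ) (D0 L : Finset α) (g : α → α), L.card ≤ N → L ⊆ D0 →
    (∀ v, ∃ u ∈ D0, u = v ∨ H.Adj u v) →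
    (∀ a ∈ D0, a ∉ L → g a ∈ D0 ∧ g a ∉ L ∧ g (g a) = a ∧ g a ≠ a ∧
      (H.Adj a (g a) ∨ ∃ w, H.Adj a w ∧ H.Adj w (g a))) →
    ∃ D : Finset α, SemiPairedDom H D ∧ D.card ≤ D0.card + L.card := by
  intro N
  induction N with
  | zero =>
    intro D0 L g hcard _ hdom hg
    have hL : L = ∅ := Finset.card_eq_zero.1 (Nat.le_zero.1 hcard)
    subst hL
    refine ⟨D0, ⟨hdom, g, ?_, ?_, ?_, ?_⟩, by simp⟩ <;>
      · intro a ha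
        have := hg a ha (by simp)
        tauto
  | succ N ih =>
    intro D0 L g hcard hLD hdom hg
    rcases L.eq_empty_or_nonempty with rfl | ⟨ℓ, hℓ⟩
    · exact ih D0 ∅ g (by simp) (by simp) hdom (by simpa using hg)
    have hℓD : ℓ ∈ D0 := hLD hℓ
    by_cases hdrop : ∀ v, (ℓ = v ∨ H.Adj ℓ v) → ∃ u ∈ D0.erase ℓ, u = v ∨ H.Adj u v
    · -- drop ℓ
      obtain ⟨D, hD, hc⟩ := ih (D0.erase ℓ) (L.erase ℓ) g
        (by have := Finset.card_erase_of_mem hℓ; omega)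
        (fun a ha => by
          rw [Finset.mem_erase] at ha ⊢
          exact ⟨ha.1, hLD ha.2⟩)
        (fun v => by
          obtain ⟨u, hu, hcase⟩ := hdom v
          by_cases huℓ : u = ℓ
          · subst huℓ; exact hdrop v hcase
          · exact ⟨u, Finset.mem_erase.2 ⟨huℓ, hu⟩, hcase⟩)
        (fun a ha haL => by
          rw [Finset.mem_erase] at ha
          have haL' : a ∉ L := fun h => haL (Finset.mem_erase.2 ⟨ha.1, h⟩)
          obtain ⟨h1, h2, h3, h4, h5⟩ := hg a ha.2 haL'
          have : g a ≠ ℓ := fun h => h2 (h ▸ hℓ)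
          exact ⟨Finset.mem_erase.2 ⟨this, h1⟩, fun h => h2 (Finset.mem_of_mem_erase h),
            h3, h4, h5⟩)
      refine ⟨D, hD, hc.trans ?_⟩
      have h1 := Finset.card_erase_of_mem hℓ
      have h2 := Finset.card_erase_of_mem hℓD
      have : 0 < L.card := Finset.card_pos.2 ⟨ℓ, hℓ⟩
      have : 0 < D0.card := Finset.card_pos.2 ⟨ℓ, hℓD⟩
      omega
    · -- find an outside partner
      push_neg at hdrop
      obtain ⟨v, hvN, hv⟩ := hdrop
      -- get w ∉ D0 with H.Adj ℓ w
      have hw : ∃ w, w ∉ D0 ∧ H.Adj ℓ w := by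
        rcases hvN with rfl | hadj
        · obtain ⟨u, hu⟩ := hiso ℓ
          refine ⟨u, fun huD => ?_, hu.symm⟩
          have huℓ : u ≠ ℓ := hu.ne
          obtain ⟨h1, h2⟩ := hv u (Finset.mem_erase.2 ⟨huℓ, huD⟩)
          exact h2 hu
        · refine ⟨v, fun hvD => ?_, hadj⟩
          have hvℓ : v ≠ ℓ := fun h => (H.irrefl (h ▸ hadj))
          obtain ⟨h1, h2⟩ := hv v (Finset.mem_erase.2 ⟨hvℓ, hvD⟩)
          exact h1 rfl
      obtain ⟨w, hwD, hadj⟩ := hw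
      have hwℓ : w ≠ ℓ := fun h => (H.irrefl (h ▸ hadj))
      set g' := Function.update (Function.update g ℓ w) w ℓ with hg'
      have hg'ℓ : g' ℓ = w := by
        rw [hg', Function.update_of_ne hwℓ.symm, Function.update_self]
      have hg'w : g' w = ℓ := by rw [hg', Function.update_self]
      have hg'other : ∀ a, a ≠ ℓ → a ≠ w → g' a = g a := fun a h1 h2 => by
        rw [hg', Function.update_of_ne h2, Function.update_of_ne h1]
      obtain ⟨D, hD, hc⟩ := ih (insert w D0) (L.erase ℓ) g'
        (by have := Finset.card_erase_of_mem hℓ; omega)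
        (fun a ha => Finset.mem_insert_of_mem (hLD (Finset.mem_of_mem_erase ha)))
        (fun v' => by
          obtain ⟨u, hu, hcase⟩ := hdom v'
          exact ⟨u, Finset.mem_insert_of_mem hu, hcase⟩)
        (fun a ha haL => by
          rcases Finset.mem_insert.1 ha with rfl | haD0
          · -- a = w
            refine ⟨?_, ?_, ?_, ?_, ?_⟩
            · rw [hg'w]; exact Finset.mem_insert_of_mem hℓD
            · rw [hg'w]; simp [Finset.mem_erase]
            · rw [hg'w, hg'ℓ]
            · rw [hg'w]; exact fun h => hwℓ h.symm
            · rw [hg'w]; exact Or.inl hadj.symm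
          · by_cases haℓ : a = ℓ
            · subst haℓ
              refine ⟨?_, ?_, ?_, ?_, ?_⟩
              · rw [hg'ℓ]; exact Finset.mem_insert_self w D0
              · rw [hg'ℓ]
                intro h
                exact hwD (hLD (Finset.mem_of_mem_erase h))
              · rw [hg'ℓ, hg'w]
              · rw [hg'ℓ]; exact hwℓ
              · rw [hg'ℓ]; exact Or.inl hadj
            · have haw : a ≠ w := fun h => hwD (h ▸ haD0)
              have haL' : a ∉ L := fun h =>
                haL (Finset.mem_erase.2 ⟨haℓ, h⟩)
              obtain ⟨h1, h2, h3, h4, h5⟩ := hg a haD0 haL'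
              have hgaℓ : g a ≠ ℓ := fun h => h2 (h ▸ hℓ)
              have hgaw : g a ≠ w := fun h => hwD (h ▸ h1)
              rw [hg'other a haℓ haw]
              refine ⟨Finset.mem_insert_of_mem h1, ?_, ?_, h4, h5⟩
              · intro h; exact h2 (Finset.mem_of_mem_erase h)
              · rw [hg'other _ hgaℓ hgaw]; exact h3)
      refine ⟨D, hD, hc.trans ?_⟩
      have h1 := Finset.card_erase_of_mem hℓ
      have h2 := Finset.card_insert_of_notMem hwD
      have : 0 < L.card := Finset.card_pos.2 ⟨ℓ, hℓ⟩
      omega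


section Main
variable {α : Type*} [DecidableEq α]

open Classical in
/-- the token of a vertex of `D0` -/
noncomputable def tok (D' : Finset (α ⊕ α × Fin 5)) (a : α) : α ⊕ α × Fin 5 :=
  if Sum.inl a ∈ D' then Sum.inl a else Sum.inr (a, 2)

/-- base vertex -/
def gb : α ⊕ α × Fin 5 → α := Sum.elim id Prod.fst

/-- token form -/
def TokForm (u : α ⊕ α × Fin 5) : Prop :=
  (∃ b, u = Sum.inl b) ∨ (∃ b, u = Sum.inr (b, (2 : Fin 5)))

noncomputable def phi (D' : Finset (α ⊕ α × Fin 5)) (f : α ⊕ α × Fin 5 → α ⊕ α × Fin 5)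
    (a : α) : α := gb (f (tok D' a))

/-- good vertices -/
def GoodP (D' : Finset (α ⊕ α × Fin 5)) (f : α ⊕ α × Fin 5 → α ⊕ α × Fin 5) (a : α) : Prop :=
  (Sum.inl a ∈ D' ∨ Sum.inr (a, (2:Fin 5)) ∈ D') ∧
    ¬(Sum.inl a ∈ D' ∧ Sum.inr (a, (2:Fin 5)) ∈ D') ∧ TokForm (f (tok D' a))

/-- bad single vertices -/
def BadS (D' : Finset (α ⊕ α × Fin 5)) (f : α ⊕ α × Fin 5 → α ⊕ α × Fin 5) (a : α) : Prop :=
  (Sum.inl a ∈ D' ∨ Sum.inr (a, (2:Fin 5)) ∈ D') ∧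
    ¬(Sum.inl a ∈ D' ∧ Sum.inr (a, (2:Fin 5)) ∈ D') ∧ ¬TokForm (f (tok D' a))

variable {H : SimpleGraph α} {D' : Finset (α ⊕ α × Fin 5)}
  {f : α ⊕ α × Fin 5 → α ⊕ α × Fin 5}

lemma gb_tok (a : α) : gb (tok D' a) = a := by
  unfold tok; split <;> rfl

lemma tok_mem {a : α} (h : Sum.inl a ∈ D' ∨ Sum.inr (a, (2:Fin 5)) ∈ D') : tok D' a ∈ D' := by
  unfold tok; split
  · assumption
  · tauto

lemma phi_spec (hf1 : ∀ u ∈ D', f u ∈ D') (hf3 : ∀ u ∈ D', f u ≠ u)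
    (hf4 : ∀ u ∈ D', Near (GP5 H) u (f u)) {a : α} (hG : GoodP D' f a) :
    (Sum.inl (phi D' f a) ∈ D' ∨ Sum.inr (phi D' f a, (2:Fin 5)) ∈ D') ∧
    phi D' f a ≠ a ∧
    (H.Adj a (phi D' f a) ∨ ∃ w, H.Adj a w ∧ H.Adj w (phi D' f a)) ∧
    (f (tok D' a) = Sum.inl (phi D' f a) ∨ f (tok D' a) = Sum.inr (phi D' f a, (2:Fin 5))) := by
  obtain ⟨hD0, hnb, htf⟩ := hG
  have htm : tok D' a ∈ D' := tok_mem hD0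
  have hy : f (tok D' a) ∈ D' := hf1 _ htm
  have hyne : f (tok D' a) ≠ tok D' a := hf3 _ htm
  have hnear : Near (GP5 H) (tok D' a) (f (tok D' a)) := hf4 _ htm
  by_cases hA : Sum.inl a ∈ D'
  · have hnB : Sum.inr (a, (2:Fin 5)) ∉ D' := fun hB => hnb ⟨hA, hB⟩
    have htok : tok D' a = Sum.inl a := if_pos hA
    rw [htok] at hy hyne hnear
    rcases htf with ⟨b, hb⟩ | ⟨b, hb⟩ <;> rw [htok] at hb <;> rw [hb] at hy hyne hnear <;>
      have hphi : phi D' f a = b := by rw [phi, htok, hb]; rfl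
    · have hba : b ≠ a := fun h => hyne (by rw [h])
      rw [hphi]
      refine ⟨Or.inl hy, hba, ?_, by rw [htok, hb]; exact Or.inl rfl⟩
      exact nearB1 (Ne.symm hba) hnear
    · have hba : b ≠ a := fun h => hnB (h ▸ hy)
      rw [hphi]
      refine ⟨Or.inr hy, hba, ?_, by rw [htok, hb]; exact Or.inr rfl⟩
      rcases nearB2 hnear with ⟨-, h⟩ | ⟨h, -⟩
      · rcases h with h | h
        · exact absurd h hba
        · exact Or.inl h
      · exact absurd h hba
  · have hB : Sum.inr (a, (2:Fin 5)) ∈ D' := by tauto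
    have htok : tok D' a = Sum.inr (a, 2) := if_neg hA
    rw [htok] at hy hyne hnear
    rcases htf with ⟨b, hb⟩ | ⟨b, hb⟩ <;> rw [htok] at hb <;> rw [hb] at hy hyne hnear <;>
      have hphi : phi D' f a = b := by rw [phi, htok, hb]; rfl
    · have hba : b ≠ a := fun h => hA (h ▸ hy)
      rw [hphi]
      refine ⟨Or.inl hy, hba, ?_, by rw [htok, hb]; exact Or.inl rfl⟩
      rcases nearB2 hnear.symm with ⟨-, h⟩ | ⟨h, -⟩
      · rcases h with h | h
        · exact absurd h.symm hba
        · exact Or.inl h.symm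
      · exact absurd h.symm hba
    · exfalso
      have : a = b := nearB4 hnear
      exact hyne (by rw [this])

lemma phi_invol (hf1 : ∀ u ∈ D', f u ∈ D') (hf2 : ∀ u ∈ D', f (f u) = u)
    (hf3 : ∀ u ∈ D', f u ≠ u) (hf4 : ∀ u ∈ D', Near (GP5 H) u (f u))
    {a : α} (hGa : GoodP D' f a) (hGb : GoodP D' f (phi D' f a)) :
    phi D' f (phi D' f a) = a := by
  obtain ⟨-, -, -, htf⟩ := phi_spec hf1 hf3 hf4 hGa
  set b := phi D' f a with hbdef
  have htm : tok D' a ∈ D' := tok_mem hGa.1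
  have htokb : tok D' b = f (tok D' a) := by
    rcases htf with h | h
    · have hbA : Sum.inl b ∈ D' := h ▸ hf1 _ htm
      rw [tok, if_pos hbA, h]
    · have hbB : Sum.inr (b, (2:Fin 5)) ∈ D' := h ▸ hf1 _ htm
      have hbnA : Sum.inl b ∉ D' := fun hA => hGb.2.1 ⟨hA, hbB⟩
      rw [tok, if_neg hbnA, h]
  rw [phi, htokb, hf2 _ htm, gb_tok]

lemma exists_x01 (hdom : ∀ v, ∃ u ∈ D', u = v ∨ (GP5 H).Adj u v) (a : α) :
    ∃ m : Fin 5, Sum.inr (a, m) ∈ D' ∧ ((m : ℕ) = 0 ∨ (m : ℕ) = 1) := by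
  obtain ⟨u, hu, hcase⟩ := hdom (Sum.inr (a, 0))
  rcases hcase with rfl | hadj
  · exact ⟨0, hu, Or.inl rfl⟩
  · rw [adjB6 hadj] at hu
    exact ⟨1, hu, Or.inr rfl⟩

lemma exists_x34 (hdom : ∀ v, ∃ u ∈ D', u = v ∨ (GP5 H).Adj u v) (a : α) :
    ∃ m : Fin 5, Sum.inr (a, m) ∈ D' ∧ ((m : ℕ) = 3 ∨ (m : ℕ) = 4) := by
  obtain ⟨u, hu, hcase⟩ := hdom (Sum.inr (a, 4))
  rcases hcase with rfl | hadj
  · exact ⟨4, hu, Or.inr rfl⟩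
  · rw [adjB7 hadj] at hu
    exact ⟨3, hu, Or.inl rfl⟩

lemma card3_le {β : Type*} [DecidableEq β] {w1 w2 w3 : β} {s : Finset β}
    (h1 : w1 ∈ s) (h2 : w2 ∈ s) (h3 : w3 ∈ s)
    (h12 : w1 ≠ w2) (h13 : w1 ≠ w3) (h23 : w2 ≠ w3) : 3 ≤ s.card := by
  have hsub : ({w1, w2, w3} : Finset β) ⊆ s := by
    intro x hx
    simp only [Finset.mem_insert, Finset.mem_singleton] at hx
    rcases hx with rfl | rfl | rfl <;> assumption
  calc 3 = ({w1, w2, w3} : Finset β).card := by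
            rw [Finset.card_insert_of_notMem (by simp [h12, h13]),
              Finset.card_insert_of_notMem (by simp [h23]), Finset.card_singleton]
    _ ≤ s.card := Finset.card_le_card hsub

lemma card4_le {β : Type*} [DecidableEq β] {w1 w2 w3 w4 : β} {s : Finset β}
    (h1 : w1 ∈ s) (h2 : w2 ∈ s) (h3 : w3 ∈ s) (h4 : w4 ∈ s)
    (h12 : w1 ≠ w2) (h13 : w1 ≠ w3) (h14 : w1 ≠ w4)
    (h23 : w2 ≠ w3) (h24 : w2 ≠ w4) (h34 : w3 ≠ w4) : 4 ≤ s.card := by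
  have hsub : ({w1, w2, w3, w4} : Finset β) ⊆ s := by
    intro x hx
    simp only [Finset.mem_insert, Finset.mem_singleton] at hx
    rcases hx with rfl | rfl | rfl | rfl <;> assumption
  calc 4 = ({w1, w2, w3, w4} : Finset β).card := by
            rw [Finset.card_insert_of_notMem (by simp [h12, h13, h14]),
              Finset.card_insert_of_notMem (by simp [h23, h24]),
              Finset.card_insert_of_notMem (by simp [h34]), Finset.card_singleton]
    _ ≤ s.card := Finset.card_le_card hsub

open Classical in
lemma S_card_bound (hf1 : ∀ u ∈ D', f u ∈ D') (hf2 : ∀ u ∈ D', f (f u) = u)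
    (hf3 : ∀ u ∈ D', f u ≠ u) (hf4 : ∀ u ∈ D', Near (GP5 H) u (f u))
    (hdom : ∀ v, ∃ u ∈ D', u = v ∨ (GP5 H).Adj u v) (a : α) :
    2 + (if Sum.inr (a, (2:Fin 5)) ∈ D' then 1 else 0) + (if BadS D' f a then 1 else 0) ≤
      (D'.filter (fun u => ∃ j : Fin 5, u = Sum.inr (a, j))).card := by
  set S := D'.filter (fun u => ∃ j : Fin 5, u = Sum.inr (a, j)) with hSdef
  have hmemS : ∀ (m : Fin 5), Sum.inr (a, m) ∈ D' → Sum.inr (a, m) ∈ S := fun m hm =>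
    Finset.mem_filter.2 ⟨hm, m, rfl⟩
  have hinj : ∀ (m m' : Fin 5), (Sum.inr (a, m) : α ⊕ α × Fin 5) = Sum.inr (a, m') → m = m' := by
    intro m m' h
    simpa using h
  obtain ⟨m0, hm0, hm0v⟩ := exists_x01 hdom a
  obtain ⟨m1, hm1, hm1v⟩ := exists_x34 hdom a
  have hm01 : m0 ≠ m1 := fun h => by rw [h] at hm0v; omega
  by_cases hBS : BadS D' f a
  swap
  · rw [if_neg hBS]
    by_cases hB : Sum.inr (a, (2:Fin 5)) ∈ D'
    · rw [if_pos hB]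
      have h2v : ((2 : Fin 5) : ℕ) = 2 := rfl
      have d1 : (Sum.inr (a, m0) : α ⊕ α × Fin 5) ≠ Sum.inr (a, m1) := fun h => hm01 (hinj _ _ h)
      have d2 : (Sum.inr (a, m0) : α ⊕ α × Fin 5) ≠ Sum.inr (a, (2:Fin 5)) := by
        intro h
        have := congrArg Fin.val (hinj _ _ h)
        omega
      have d3 : (Sum.inr (a, m1) : α ⊕ α × Fin 5) ≠ Sum.inr (a, (2:Fin 5)) := by
        intro h
        have := congrArg Fin.val (hinj _ _ h)
        omega
      have := card3_le (hmemS m0 hm0) (hmemS m1 hm1) (hmemS 2 hB) d1 d2 d3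
      omega
    · rw [if_neg hB]
      have d1 : (Sum.inr (a, m0) : α ⊕ α × Fin 5) ≠ Sum.inr (a, m1) := fun h => hm01 (hinj _ _ h)
      have hsub : ({Sum.inr (a, m0), Sum.inr (a, m1)} : Finset (α ⊕ α × Fin 5)) ⊆ S := by
        intro x hx
        simp only [Finset.mem_insert, Finset.mem_singleton] at hx
        rcases hx with rfl | rfl
        · exact hmemS m0 hm0
        · exact hmemS m1 hm1
      have h2 : ({Sum.inr (a, m0), Sum.inr (a, m1)} : Finset (α ⊕ α × Fin 5)).card = 2 := by
        rw [Finset.card_insert_of_notMem (by simp [d1]), Finset.card_singleton]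
      have := Finset.card_le_card hsub
      omega
  · rw [if_pos hBS]
    obtain ⟨hD0, hnb, hnt⟩ := hBS
    have htm : tok D' a ∈ D' := tok_mem hD0
    have hy : f (tok D' a) ∈ D' := hf1 _ htm
    have hyne : f (tok D' a) ≠ tok D' a := hf3 _ htm
    have hnear : Near (GP5 H) (tok D' a) (f (tok D' a)) := hf4 _ htm
    by_cases hA : Sum.inl a ∈ D'
    · have hnB : Sum.inr (a, (2:Fin 5)) ∉ D' := fun hB => hnb ⟨hA, hB⟩
      rw [if_neg hnB]
      have htok : tok D' a = Sum.inl a := if_pos hA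
      rw [htok] at hy hyne hnear
      obtain ⟨jy, hyeq, hjyv⟩ : ∃ jy : Fin 5, f (Sum.inl a) = Sum.inr (a, jy) ∧
          ((jy : ℕ) = 1 ∨ (jy : ℕ) = 3) := by
        rcases hfy : f (Sum.inl a) with b | ⟨b, jy⟩
        · exact absurd (Or.inl ⟨b, htok ▸ hfy⟩) hnt
        · rw [hfy] at hnear
          rcases nearB2 hnear with ⟨h2, -⟩ | ⟨rfl, hv⟩
          · exact absurd (Or.inr ⟨b, htok ▸ (hfy.trans (by rw [h2]))⟩) hnt
          · exact ⟨jy, rfl, hv⟩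
      have hjy2 : (jy : ℕ) ≠ 2 := by omega
      rw [hyeq] at hy
      obtain ⟨mz, hmz, hmzv, hmzjy⟩ : ∃ mz : Fin 5, Sum.inr (a, mz) ∈ D' ∧
          (mz : ℕ) ≠ 2 ∧ mz ≠ jy := by
        by_cases hcase : m0 = jy
        · exact ⟨m1, hm1, by omega, fun h => hm01 (hcase.trans h.symm)⟩
        · exact ⟨m0, hm0, by omega, hcase⟩
      have hznear : Near (GP5 H) (Sum.inr (a, mz)) (f (Sum.inr (a, mz))) := hf4 _ hmz
      obtain ⟨kf, hkf⟩ : ∃ kf : Fin 5, f (Sum.inr (a, mz)) = Sum.inr (a, kf) := by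
        rcases nearB5 hmzv hznear with h | h
        · exfalso
          have h2 : f (Sum.inl a) = Sum.inr (a, mz) := by rw [← h]; exact hf2 _ hmz
          rw [hyeq] at h2
          exact hmzjy (hinj _ _ h2.symm)
        · exact h
      have hfz : Sum.inr (a, kf) ∈ D' := hkf ▸ hf1 _ hmz
      have d1 : (Sum.inr (a, jy) : α ⊕ α × Fin 5) ≠ Sum.inr (a, mz) :=
        fun h => hmzjy (hinj _ _ h.symm)
      have d2 : (Sum.inr (a, jy) : α ⊕ α × Fin 5) ≠ Sum.inr (a, kf) := by
        intro hh
        have e1 : f (Sum.inl a) = f (Sum.inr (a, mz)) := by rw [hyeq, hkf, hh]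
        have e2 := congrArg f e1
        rw [hf2 _ hA, hf2 _ hmz] at e2
        exact Sum.inl_ne_inr e2
      have d3 : (Sum.inr (a, mz) : α ⊕ α × Fin 5) ≠ Sum.inr (a, kf) :=
        fun h => hf3 _ hmz (hkf.trans h.symm)
      have := card3_le (hmemS jy hy) (hmemS mz hmz) (hmemS kf hfz) d1 d2 d3
      omega
    · have hB : Sum.inr (a, (2:Fin 5)) ∈ D' := by tauto
      rw [if_pos hB]
      have htok : tok D' a = Sum.inr (a, 2) := if_neg hA
      rw [htok] at hy hyne hnear
      obtain ⟨jy, hyeq, hjy2⟩ : ∃ jy : Fin 5, f (Sum.inr (a, 2)) = Sum.inr (a, jy) ∧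
          (jy : ℕ) ≠ 2 := by
        rcases hfy : f (Sum.inr (a, (2 : Fin 5))) with b | ⟨b, jy⟩
        · exact absurd (Or.inl ⟨b, htok ▸ hfy⟩) hnt
        · rw [hfy] at hnear
          have hab : a = b := nearB4 hnear
          subst hab
          refine ⟨jy, rfl, ?_⟩
          intro hv
          have hjy : jy = (2 : Fin 5) := Fin.ext (by simpa using hv)
          exact hnt (Or.inr ⟨a, by rw [htok, hfy, hjy]⟩)
      rw [hyeq] at hy hyne
      by_cases hcase : jy = m0 ∨ jy = m1
      · obtain ⟨mz, hmz, hmzv, hmzjy⟩ : ∃ mz : Fin 5, Sum.inr (a, mz) ∈ D' ∧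
            (mz : ℕ) ≠ 2 ∧ mz ≠ jy := by
          rcases hcase with rfl | rfl
          · exact ⟨m1, hm1, by omega, fun h => hm01 h.symm⟩
          · exact ⟨m0, hm0, by omega, fun h => hm01 h⟩
        have hznear : Near (GP5 H) (Sum.inr (a, mz)) (f (Sum.inr (a, mz))) := hf4 _ hmz
        obtain ⟨kf, hkf⟩ : ∃ kf : Fin 5, f (Sum.inr (a, mz)) = Sum.inr (a, kf) := by
          rcases nearB5 hmzv hznear with h | h
          · exfalso
            have := hf1 _ hmz
            rw [h] at this
            exact hA this
          · exact h
        have hfz : Sum.inr (a, kf) ∈ D' := hkf ▸ hf1 _ hmz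
        have h2v : ((2 : Fin 5) : ℕ) = 2 := rfl
        have d12 : (Sum.inr (a, (2:Fin 5)) : α ⊕ α × Fin 5) ≠ Sum.inr (a, jy) := by
          intro h
          have := congrArg Fin.val (hinj _ _ h)
          omega
        have d13 : (Sum.inr (a, (2:Fin 5)) : α ⊕ α × Fin 5) ≠ Sum.inr (a, mz) := by
          intro h
          have := congrArg Fin.val (hinj _ _ h)
          omega
        have d14 : (Sum.inr (a, (2:Fin 5)) : α ⊕ α × Fin 5) ≠ Sum.inr (a, kf) := by
          intro hh
          have e := congrArg f hkf
          rw [hf2 _ hmz, ← hh, hyeq] at e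
          exact hmzjy (hinj _ _ e)
        have d23 : (Sum.inr (a, jy) : α ⊕ α × Fin 5) ≠ Sum.inr (a, mz) :=
          fun h => hmzjy (hinj _ _ h.symm)
        have d24 : (Sum.inr (a, jy) : α ⊕ α × Fin 5) ≠ Sum.inr (a, kf) := by
          intro hh
          have e1 : f (Sum.inr (a, (2:Fin 5))) = f (Sum.inr (a, mz)) := by
            rw [hyeq, hkf, hh]
          have e2 := congrArg f e1
          rw [hf2 _ hB, hf2 _ hmz] at e2
          have := congrArg Fin.val (hinj _ _ e2)
          omega
        have d34 : (Sum.inr (a, mz) : α ⊕ α × Fin 5) ≠ Sum.inr (a, kf) :=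
          fun h => hf3 _ hmz (hkf.trans h.symm)
        have := card4_le (hmemS 2 hB) (hmemS jy hy) (hmemS mz hmz) (hmemS kf hfz)
          d12 d13 d14 d23 d24 d34
        omega
      · push_neg at hcase
        obtain ⟨hc0, hc1⟩ := hcase
        have h2v : ((2 : Fin 5) : ℕ) = 2 := rfl
        have d12 : (Sum.inr (a, (2:Fin 5)) : α ⊕ α × Fin 5) ≠ Sum.inr (a, m0) := by
          intro h
          have := congrArg Fin.val (hinj _ _ h)
          omega
        have d13 : (Sum.inr (a, (2:Fin 5)) : α ⊕ α × Fin 5) ≠ Sum.inr (a, m1) := by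
          intro h
          have := congrArg Fin.val (hinj _ _ h)
          omega
        have d14 : (Sum.inr (a, (2:Fin 5)) : α ⊕ α × Fin 5) ≠ Sum.inr (a, jy) := by
          intro h
          have := congrArg Fin.val (hinj _ _ h)
          omega
        have d23 : (Sum.inr (a, m0) : α ⊕ α × Fin 5) ≠ Sum.inr (a, m1) :=
          fun h => hm01 (hinj _ _ h)
        have d24 : (Sum.inr (a, m0) : α ⊕ α × Fin 5) ≠ Sum.inr (a, jy) :=
          fun h => hc0 (hinj _ _ h.symm)
        have d34 : (Sum.inr (a, m1) : α ⊕ α × Fin 5) ≠ Sum.inr (a, jy) :=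
          fun h => hc1 (hinj _ _ h.symm)
        have := card4_le (hmemS 2 hB) (hmemS m0 hm0) (hmemS m1 hm1) (hmemS jy hy)
          d12 d13 d14 d23 d24 d34
        omega

end Main

/-- If the GP5-graph of `H` (connected, no isolated vertices, `n` vertices)
has a semipaired dominating set of size at most `2n + k` with `k ≤ n`, then `H` has a
semipaired dominating set of size at most `k`. -/
theorem gp5_semiPairedDom_reverse {α : Type*} [Fintype α] [DecidableEq α]
    (H : SimpleGraph α) (hH : H.Connected) (hiso : ∀ v : α, ∃ u : α, H.Adj u v)
    (k : ℕ) (hk : k ≤ Fintype.card α)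
    (h : ∃ D' : Finset (α ⊕ α × Fin 5),
      SemiPairedDom (GP5 H) D' ∧ D'.card ≤ 2 * Fintype.card α + k) :
    ∃ D : Finset α, SemiPairedDom H D ∧ D.card ≤ k := by
  classical
  obtain ⟨D', ⟨hdom', f, hf1, hf2, hf3, hf4'⟩, hcard⟩ := h
  have hf4 : ∀ u ∈ D', Near (GP5 H) u (f u) := hf4'
  set n := Fintype.card α with hn
  -- basic sets
  set A : Finset α := Finset.univ.filter (fun a => Sum.inl a ∈ D') with hA
  set B : Finset α := Finset.univ.filter (fun a => Sum.inr (a, (2:Fin 5)) ∈ D') with hB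
  set D0 : Finset α := A ∪ B with hD0
  have hmemA : ∀ a, a ∈ A ↔ Sum.inl a ∈ D' := fun a => by simp [hA]
  have hmemB : ∀ a, a ∈ B ↔ Sum.inr (a, (2:Fin 5)) ∈ D' := fun a => by simp [hB]
  have hmemD0 : ∀ a, a ∈ D0 ↔ (Sum.inl a ∈ D' ∨ Sum.inr (a, (2:Fin 5)) ∈ D') := fun a => by
    rw [hD0, Finset.mem_union, hmemA, hmemB]
  -- counting part
  set S : α → Finset (α ⊕ α × Fin 5) :=
    fun a => D'.filter (fun u => ∃ j : Fin 5, u = Sum.inr (a, j)) with hS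
  set BadSF : Finset α := Finset.univ.filter (BadS D' f) with hBadSF
  have hcount1 : A.card + ∑ a ∈ Finset.univ, (S a).card ≤ D'.card := by
    have hsub : A.image Sum.inl ∪ Finset.univ.biUnion S ⊆ D' := by
      intro x hx
      rcases Finset.mem_union.1 hx with hx | hx
      · obtain ⟨a, ha, rfl⟩ := Finset.mem_image.1 hx
        exact (hmemA a).1 ha
      · obtain ⟨a, -, hx⟩ := Finset.mem_biUnion.1 hx
        exact (Finset.mem_filter.1 hx).1
    have hdisj : Disjoint (A.image Sum.inl) (Finset.univ.biUnion S) := by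
      rw [Finset.disjoint_left]
      intro x hx1 hx2
      obtain ⟨a, -, rfl⟩ := Finset.mem_image.1 hx1
      obtain ⟨b, -, hx2⟩ := Finset.mem_biUnion.1 hx2
      obtain ⟨-, j, hj⟩ := Finset.mem_filter.1 hx2
      exact Sum.inl_ne_inr hj
    have hbi : (Finset.univ.biUnion S).card = ∑ a ∈ Finset.univ, (S a).card := by
      apply Finset.card_biUnion
      rintro a - b - hab
      rw [Function.onFun, Finset.disjoint_left]
      intro x hx1 hx2
      obtain ⟨-, j, rfl⟩ := Finset.mem_filter.1 hx1
      obtain ⟨-, j', hj'⟩ := Finset.mem_filter.1 hx2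
      rw [Sum.inr.injEq, Prod.mk.injEq] at hj'
      exact hab hj'.1
    calc A.card + ∑ a ∈ Finset.univ, (S a).card
        = (A.image Sum.inl).card + (Finset.univ.biUnion S).card := by
          rw [Finset.card_image_of_injective _ Sum.inl_injective, hbi]
      _ = (A.image Sum.inl ∪ Finset.univ.biUnion S).card :=
          (Finset.card_union_of_disjoint hdisj).symm
      _ ≤ D'.card := Finset.card_le_card hsub
  have hcount2 : 2 * n + B.card + BadSF.card ≤ ∑ a ∈ Finset.univ, (S a).card := by
    have hper : ∀ a ∈ Finset.univ,
        2 + (if Sum.inr (a, (2:Fin 5)) ∈ D' then 1 else 0) + (if BadS D' f a then 1 else 0)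
          ≤ (S a).card := fun a _ => S_card_bound hf1 hf2 hf3 hf4 hdom' a
    have hle := Finset.sum_le_sum hper
    have hsplit : ∑ a ∈ Finset.univ, (2 + (if Sum.inr (a, (2:Fin 5)) ∈ D' then 1 else 0)
        + (if BadS D' f a then 1 else 0))
        = 2 * n + B.card + BadSF.card := by
      have e0 : ∑ _a ∈ (Finset.univ : Finset α), (2:ℕ) = 2 * n := by
        rw [Finset.sum_const, Finset.card_univ, smul_eq_mul, mul_comm]
      have e1 : ∑ a ∈ Finset.univ, (if Sum.inr (a, (2:Fin 5)) ∈ D' then (1:ℕ) else 0)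
          = B.card := by
        rw [hB, Finset.card_filter]
      have e2 : ∑ a ∈ Finset.univ, (if BadS D' f a then (1:ℕ) else 0) = BadSF.card := by
        rw [hBadSF, Finset.card_filter]
      rw [Finset.sum_add_distrib, Finset.sum_add_distrib, e0, e1, e2]
    rw [hsplit] at hle
    exact hle
  -- the good/bad classification
  set GoodF : Finset α := D0.filter (GoodP D' f) with hGoodF
  set BadF : Finset α := D0 \ GoodF with hBadF
  have hGoodFsub : GoodF ⊆ D0 := Finset.filter_subset _ _
  have hGoodFP : ∀ a ∈ GoodF, GoodP D' f a := fun a ha => (Finset.mem_filter.1 ha).2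
  have hBadsub : BadF ⊆ A ∩ B ∪ BadSF := by
    intro a ha
    obtain ⟨haD0, hanG⟩ := Finset.mem_sdiff.1 ha
    by_cases hab : Sum.inl a ∈ D' ∧ Sum.inr (a, (2:Fin 5)) ∈ D'
    · exact Finset.mem_union_left _ (Finset.mem_inter.2 ⟨(hmemA a).2 hab.1, (hmemB a).2 hab.2⟩)
    · by_cases htf : TokForm (f (tok D' a))
      · exact absurd (Finset.mem_filter.2 ⟨haD0, (hmemD0 a).1 haD0, hab, htf⟩) hanG
      · exact Finset.mem_union_right _
          (Finset.mem_filter.2 ⟨Finset.mem_univ a, (hmemD0 a).1 haD0, hab, htf⟩)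
  have hcountBad : BadF.card ≤ (A ∩ B).card + BadSF.card :=
    le_trans (Finset.card_le_card hBadsub) (Finset.card_union_le _ _)
  have hABcard : D0.card + (A ∩ B).card = A.card + B.card := by
    rw [hD0]; exact Finset.card_union_add_card_inter A B
  have hkey : D0.card + BadF.card ≤ k := by
    rw [hn] at hcard
    omega
  -- the pairing
  set phi' : α → α := phi D' f with hphi'
  set Good2F : Finset α := GoodF.filter (fun a => phi' a ∈ GoodF) with hGood2F
  set Good1F : Finset α := GoodF \ Good2F with hGood1F
  set Q : α → Finset α := fun b => Good1F.filter (fun a => phi' a = b) with hQ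
  set rsel : α → α := fun b => if h : (Q b).Nonempty then h.choose else b with hrsel
  set pairedP : α → Prop := fun a => a ∈ Good2F ∨ (a ∈ BadF ∧ (Q a).Nonempty) ∨
    (a ∈ Good1F ∧ rsel (phi' a) = a) with hpairedP
  set g0 : α → α := fun a => if a ∈ Good2F then phi' a
    else if a ∈ BadF ∧ (Q a).Nonempty then rsel a
    else if a ∈ Good1F ∧ rsel (phi' a) = a then phi' a else a with hg0
  set L : Finset α := D0.filter (fun a => ¬ pairedP a) with hL
  have hLsub : L ⊆ D0 := Finset.filter_subset _ _
  -- helper facts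
  have hphiD0 : ∀ a ∈ GoodF, phi' a ∈ D0 := fun a ha =>
    (hmemD0 _).2 (phi_spec hf1 hf3 hf4 (hGoodFP a ha)).1
  have hphine : ∀ a ∈ GoodF, phi' a ≠ a := fun a ha =>
    (phi_spec hf1 hf3 hf4 (hGoodFP a ha)).2.1
  have hphidist : ∀ a ∈ GoodF, H.Adj a (phi' a) ∨ ∃ w, H.Adj a w ∧ H.Adj w (phi' a) :=
    fun a ha => (phi_spec hf1 hf3 hf4 (hGoodFP a ha)).2.2.1
  have hphiinvol : ∀ a ∈ GoodF, phi' a ∈ GoodF → phi' (phi' a) = a := fun a ha hpa =>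
    phi_invol hf1 hf2 hf3 hf4 (hGoodFP a ha) (hGoodFP _ hpa)
  have hrselQ : ∀ b, (Q b).Nonempty → rsel b ∈ Q b := by
    intro b hb
    rw [hrsel]
    simp only [dif_pos hb]
    exact hb.choose_spec
  have hQmem : ∀ a b, a ∈ Q b ↔ a ∈ Good1F ∧ phi' a = b := fun a b => by
    rw [hQ]; simp [Finset.mem_filter]
  have hG1G : Good1F ⊆ GoodF := Finset.sdiff_subset
  have hG2G : Good2F ⊆ GoodF := Finset.filter_subset _ _
  have hBadGood : ∀ a, a ∈ BadF → a ∈ GoodF → False := fun a hb hg =>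
    (Finset.mem_sdiff.1 hb).2 hg
  have hBadD0 : BadF ⊆ D0 := Finset.sdiff_subset
  -- Q has at most two elements
  have hQ2 : ∀ b, (Q b).card ≤ 2 := by
    intro b
    have : (Q b).card ≤ ({Sum.inl b, Sum.inr (b, (2:Fin 5))} :
        Finset (α ⊕ α × Fin 5)).card := by
      apply Finset.card_le_card_of_injOn (fun a => f (tok D' a))
      · intro a ha
        obtain ⟨haG1, hphia⟩ := (hQmem a b).1 ha
        have hGP := hGoodFP a (hG1G haG1)
        rcases hGP.2.2 with ⟨c, hc⟩ | ⟨c, hc⟩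
        · have hpc : phi' a = c := by rw [hphi', phi, hc]; rfl
          have hcb : c = b := hpc.symm.trans hphia
          beta_reduce; rw [hc, hcb]
          simp
        · have hpc : phi' a = c := by rw [hphi', phi, hc]; rfl
          have hcb : c = b := hpc.symm.trans hphia
          beta_reduce; rw [hc, hcb]
          simp
      · intro a ha a' ha' heq
        obtain ⟨haG1, -⟩ := (hQmem a b).1 ha
        obtain ⟨haG1', -⟩ := (hQmem a' b).1 ha'
        have hta : tok D' a ∈ D' := tok_mem (hGoodFP a (hG1G haG1)).1
        have hta' : tok D' a' ∈ D' := tok_mem (hGoodFP a' (hG1G haG1')).1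
        have := congrArg f heq
        rw [hf2 _ hta, hf2 _ hta'] at this
        have := congrArg gb this
        rwa [gb_tok, gb_tok] at this
    have : ({Sum.inl b, Sum.inr (b, (2:Fin 5))} : Finset (α ⊕ α × Fin 5)).card ≤ 2 :=
      Finset.card_insert_le _ _ |>.trans (by simp)
    omega
  -- paired elements are not in L
  have hnotL : ∀ a, pairedP a → a ∉ L := fun a hp hL' => by
    rw [hL] at hL'
    exact (Finset.mem_filter.1 hL').2 hp
  have hinL : ∀ a, a ∈ D0 → a ∉ L → pairedP a := fun a ha hna => by
    by_contra hnp
    exact hna (Finset.mem_filter.2 ⟨ha, hnp⟩)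
  -- the pairing properties
  have hprops : ∀ a ∈ D0, a ∉ L → g0 a ∈ D0 ∧ g0 a ∉ L ∧ g0 (g0 a) = a ∧ g0 a ≠ a ∧
      (H.Adj a (g0 a) ∨ ∃ w, H.Adj a w ∧ H.Adj w (g0 a)) := by
    intro a haD0 haL
    have hp := hinL a haD0 haL
    rcases hp with hp | ⟨hpB, hpQ⟩ | ⟨hpG1, hpr⟩
    · -- a ∈ Good2F
      have haG : a ∈ GoodF := hG2G hp
      have hpaG : phi' a ∈ GoodF := (Finset.mem_filter.1 hp).2
      have hinv : phi' (phi' a) = a := hphiinvol a haG hpaG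
      have hpa2 : phi' a ∈ Good2F := Finset.mem_filter.2 ⟨hpaG, by rw [hinv]; exact haG⟩
      have hga : g0 a = phi' a := by rw [hg0]; simp only [if_pos hp]
      have hgpa : g0 (phi' a) = phi' (phi' a) := by rw [hg0]; simp only [if_pos hpa2]
      refine ⟨?_, ?_, ?_, ?_, ?_⟩
      · rw [hga]; exact hphiD0 a haG
      · rw [hga]; exact hnotL _ (Or.inl hpa2)
      · rw [hga, hgpa, hinv]
      · rw [hga]; exact hphine a haG
      · rw [hga]; exact hphidist a haG
    · -- a ∈ BadF with Q a nonempty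
      have hr := hrselQ a hpQ
      obtain ⟨hrG1, hrphi⟩ := (hQmem _ _).1 hr
      have hrG : rsel a ∈ GoodF := hG1G hrG1
      have hanG2 : a ∉ Good2F := fun h => hBadGood a hpB (hG2G h)
      have hga : g0 a = rsel a := by
        rw [hg0]; simp only [if_neg hanG2, if_pos (⟨hpB, hpQ⟩ : a ∈ BadF ∧ (Q a).Nonempty)]
      have hrnG2 : rsel a ∉ Good2F := (Finset.mem_sdiff.1 hrG1).2
      have hrnB : ¬(rsel a ∈ BadF ∧ (Q (rsel a)).Nonempty) := fun hh =>
        hBadGood _ hh.1 hrG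
      have hgr : g0 (rsel a) = phi' (rsel a) := by
        rw [hg0]
        simp only [if_neg hrnG2, if_neg hrnB]
        rw [if_pos ⟨hrG1, by rw [hrphi]⟩]
      refine ⟨?_, ?_, ?_, ?_, ?_⟩
      · rw [hga]; exact hGoodFsub hrG
      · rw [hga]; exact hnotL _ (Or.inr (Or.inr ⟨hrG1, by rw [hrphi]⟩))
      · rw [hga, hgr, hrphi]
      · rw [hga]; intro hh; exact hBadGood a hpB (hh ▸ hrG)
      · rw [hga]
        have := hphidist _ hrG
        rw [hrphi] at this
        rcases this with hadj | ⟨w, hw1, hw2⟩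
        · exact Or.inl hadj.symm
        · exact Or.inr ⟨w, hw2.symm, hw1.symm⟩
    · -- a ∈ Good1F with rsel (phi' a) = a
      have haG : a ∈ GoodF := hG1G hpG1
      have hanG2 : a ∉ Good2F := (Finset.mem_sdiff.1 hpG1).2
      have hpaD0 : phi' a ∈ D0 := hphiD0 a haG
      have hpanG : phi' a ∉ GoodF := fun hh =>
        hanG2 (Finset.mem_filter.2 ⟨haG, hh⟩)
      have hpaB : phi' a ∈ BadF := Finset.mem_sdiff.2 ⟨hpaD0, hpanG⟩
      have hQne : (Q (phi' a)).Nonempty := ⟨a, (hQmem _ _).2 ⟨hpG1, rfl⟩⟩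
      have hanB : a ∉ BadF := fun hh => hBadGood a hh haG
      have hga : g0 a = phi' a := by
        rw [hg0]
        simp only [if_neg hanG2]
        rw [if_neg (fun hh : a ∈ BadF ∧ (Q a).Nonempty => hanB hh.1),
          if_pos ⟨hpG1, hpr⟩]
      have hpanG2 : phi' a ∉ Good2F := fun hh => hpanG (hG2G hh)
      have hgpa : g0 (phi' a) = rsel (phi' a) := by
        rw [hg0]; simp only [if_neg hpanG2, if_pos (⟨hpaB, hQne⟩ : phi' a ∈ BadF ∧ (Q (phi' a)).Nonempty)]
      refine ⟨?_, ?_, ?_, ?_, ?_⟩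
      · rw [hga]; exact hpaD0
      · rw [hga]; exact hnotL _ (Or.inr (Or.inl ⟨hpaB, hQne⟩))
      · rw [hga, hgpa, hpr]
      · rw [hga]; exact hphine a haG
      · rw [hga]; exact hphidist a haG
  -- L is small
  have hLBad : L.card ≤ BadF.card := by
    apply Finset.card_le_card_of_injOn (fun a => if a ∈ BadF then a else phi' a)
    · intro a ha
      obtain ⟨haD0, hnp⟩ := Finset.mem_filter.1 ha
      by_cases hb : a ∈ BadF
      · simpa [hb] using hb
      · have haG : a ∈ GoodF := by
          by_contra hng
          exact hb (Finset.mem_sdiff.2 ⟨haD0, hng⟩)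
        have hpaB : phi' a ∈ BadF := by
          apply Finset.mem_sdiff.2
          refine ⟨hphiD0 a haG, fun hh => ?_⟩
          exact hnp (Or.inl (Finset.mem_filter.2 ⟨haG, hh⟩))
        simpa [hb] using hpaB
    · intro a ha a' ha' heq
      obtain ⟨haD0, hnp⟩ := Finset.mem_filter.1 ha
      obtain ⟨haD0', hnp'⟩ := Finset.mem_filter.1 ha'
      by_contra hne
      have hGoodOf : ∀ x, x ∈ D0 → ¬ pairedP x → x ∉ BadF → x ∈ Good1F := by
        intro x hx hnpx hnb
        have hxG : x ∈ GoodF := by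
          by_contra hng
          exact hnb (Finset.mem_sdiff.2 ⟨hx, hng⟩)
        refine Finset.mem_sdiff.2 ⟨hxG, fun h2 => hnpx (Or.inl h2)⟩
      by_cases hb : a ∈ BadF <;> by_cases hb' : a' ∈ BadF
      · simp only [if_pos hb, if_pos hb'] at heq; exact hne heq
      · simp only [if_pos hb, if_neg hb'] at heq
        have haG1' : a' ∈ Good1F := hGoodOf a' haD0' hnp' hb'
        have : a' ∈ Q a := (hQmem _ _).2 ⟨haG1', heq.symm⟩
        exact hnp (Or.inr (Or.inl ⟨hb, ⟨a', this⟩⟩))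
      · simp only [if_neg hb, if_pos hb'] at heq
        have haG1 : a ∈ Good1F := hGoodOf a haD0 hnp hb
        have : a ∈ Q a' := (hQmem _ _).2 ⟨haG1, heq⟩
        exact hnp' (Or.inr (Or.inl ⟨hb', ⟨a, this⟩⟩))
      · simp only [if_neg hb, if_neg hb'] at heq
        have haG1 : a ∈ Good1F := hGoodOf a haD0 hnp hb
        have haG1' : a' ∈ Good1F := hGoodOf a' haD0' hnp' hb'
        set b := phi' a with hbb
        have haQ : a ∈ Q b := (hQmem _ _).2 ⟨haG1, rfl⟩
        have haQ' : a' ∈ Q b := (hQmem _ _).2 ⟨haG1', heq.symm⟩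
        have hQne : (Q b).Nonempty := ⟨a, haQ⟩
        have hrQ : rsel b ∈ Q b := hrselQ b hQne
        have hra : rsel b ≠ a := fun hh => hnp (Or.inr (Or.inr ⟨haG1, hh⟩))
        have hra' : rsel b ≠ a' := fun hh =>
          hnp' (Or.inr (Or.inr ⟨haG1', by rw [← heq]; exact hh⟩))
        have h3 : 3 ≤ (Q b).card :=
          card3_le hrQ haQ haQ' hra hra' hne
        have := hQ2 b
        omega
  -- H is dominated by D0
  have hdomH : ∀ v, ∃ u ∈ D0, u = v ∨ H.Adj u v := by
    intro v
    obtain ⟨u, hu, hcase⟩ := hdom' (Sum.inl v)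
    rcases hcase with rfl | hadj
    · exact ⟨v, (hmemD0 v).2 (Or.inl hu), Or.inl rfl⟩
    · rcases u with b | ⟨b, j⟩
      · exact ⟨b, (hmemD0 b).2 (Or.inl hu), Or.inr (gp5_adj_inl_inl.1 hadj)⟩
      · obtain ⟨rfl, rfl⟩ := gp5_adj_inr_inl.1 hadj
        exact ⟨b, (hmemD0 b).2 (Or.inr hu), Or.inl rfl⟩
  -- conclude
  obtain ⟨D, hD, hc⟩ := pairup H hiso L.card D0 L g0 le_rfl hLsub hdomH
    (fun a ha hna => hprops a ha hna)
  exact ⟨D, hD, by omega⟩
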